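/- Let k and n be integers with 1 ≤ k < n. If n is even, there exists a (k, n, n)-fractionally balanced tripartite hypergraph whose matching number is at most min(k, ⌊3n/4⌋); if n is odd, there exists a (k, n, n)-fractionally balanced tripartite hypergraph whose matching number is at most min(k, ⌊(3n+1)/4⌋). -/

import Mathlib

/-- `f` is a balanced weight function on the tripartite hypergraph `H`:
nonnegative, vanishing outside `H`, with constant degrees on each of the three sides. -/
def TriBalanced {a b c : ℕ} (H : Finset (Fin a × Fin b × Fin c))
    (f : Fin a × Fin b × Fin c → ℝ) : Prop :=
  (∀ e, 0 ≤ f e) ∧ (∀ e, e ∉ H → f e = 0) ∧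
    (∀ v w : Fin a, (∑ e : Fin a × Fin b × Fin c, if e.1 = v then f e else 0) =
      ∑ e : Fin a × Fin b × Fin c, if e.1 = w then f e else 0) ∧
    (∀ v w : Fin b, (∑ e : Fin a × Fin b × Fin c, if e.2.1 = v then f e else 0) =
      ∑ e : Fin a × Fin b × Fin c, if e.2.1 = w then f e else 0) ∧
    (∀ v w : Fin c, (∑ e : Fin a × Fin b × Fin c, if e.2.2 = v then f e else 0) =
      ∑ e : Fin a × Fin b × Fin c, if e.2.2 = w then f e else 0)

/-- `H` is an `(a,b,c)`-fractionally balanced tripartite hypergraph. -/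
def TriFracBalanced {a b c : ℕ} (H : Finset (Fin a × Fin b × Fin c)) : Prop :=
  ∃ f, TriBalanced H f ∧ f ≠ 0

/-- `M` is a matching in `H`: a set of edges of `H` any two distinct members of
which differ in all three coordinates. -/
def TriMatching {a b c : ℕ} (H M : Finset (Fin a × Fin b × Fin c)) : Prop :=
  M ⊆ H ∧ ∀ e ∈ M, ∀ f ∈ M, e ≠ f → e.1 ≠ f.1 ∧ e.2.1 ≠ f.2.1 ∧ e.2.2 ≠ f.2.2

namespace BMAux

open Finset

/-- The weight function of our construction.  Vertices `≥ 2p` on the two `n`-sides form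
a complete "bulk" with color-dependent weights; vertices `< 2p` are grouped in couples
`{2j, 2j+1}`, the diagonal cells in couple `j` carry color `2j`, the antidiagonal
cells carry color `2j+1`. -/
noncomputable def Fw (k n p i b c : ℕ) : ℝ :=
  if 2*p ≤ b ∧ 2*p ≤ c then
    (if i < 2*p then (n:ℝ) - (k:ℝ) else (n:ℝ)) / (((n - 2*p : ℕ) : ℝ))^2
  else if b < 2*p ∧ c < 2*p ∧ b/2 = c/2 ∧ i = (if b = c then 2*(b/2) else 2*(b/2)+1) then
    (k:ℝ)/2
  else 0

lemma Fw_nonneg {k n p : ℕ} (hkn : k ≤ n) (i b c : ℕ) : 0 ≤ Fw k n p i b c := by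
  have hknR : (k:ℝ) ≤ n := by exact_mod_cast hkn
  unfold Fw
  split_ifs <;>
    first
      | exact le_refl 0
      | positivity
      | exact div_nonneg (by linarith) (by positivity)

lemma Fw_symm (k n p i b c : ℕ) : Fw k n p i b c = Fw k n p i c b := by
  rcases eq_or_ne b c with rfl | hbc
  · rfl
  · unfold Fw
    rw [if_neg hbc, if_neg (Ne.symm hbc)]
    split_ifs <;> first | rfl | omega

lemma Fw_x_eval {k n p : ℕ} (i b c : ℕ) (hb : b < 2*p) (hc : c < 2*p) (hdiv : b/2 = c/2) :
    Fw k n p i b c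
      = if i = (if b = c then 2*(b/2) else 2*(b/2)+1) then (k:ℝ)/2 else 0 := by
  unfold Fw
  rw [if_neg (by omega : ¬(2*p ≤ b ∧ 2*p ≤ c))]
  by_cases hi : i = (if b = c then 2*(b/2) else 2*(b/2)+1)
  · rw [if_pos ⟨hb, hc, hdiv, hi⟩, if_pos hi]
  · rw [if_neg (fun h => hi h.2.2.2), if_neg hi]

lemma Fw_bulk_eval {k n p : ℕ} (i b c : ℕ) (hb : 2*p ≤ b) :
    Fw k n p i b c
      = if 2*p ≤ c then
          (if i < 2*p then (n:ℝ) - (k:ℝ) else (n:ℝ)) / (((n - 2*p : ℕ) : ℝ))^2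
        else 0 := by
  unfold Fw
  split_ifs <;> first | rfl | omega

lemma sum_c_bulk {k n p : ℕ} (hpn : 2*p ≤ n) (i b : ℕ) (hb : 2*p ≤ b) :
    ∑ c ∈ range n, Fw k n p i b c
      = ((n - 2*p : ℕ) : ℝ) *
          ((if i < 2*p then (n:ℝ) - (k:ℝ) else (n:ℝ)) / (((n - 2*p : ℕ) : ℝ))^2) := by
  have h1 : ∑ c ∈ range n, Fw k n p i b c
      = ∑ c ∈ range n,
          (if 2*p ≤ c then
            (if i < 2*p then (n:ℝ) - (k:ℝ) else (n:ℝ)) / (((n - 2*p : ℕ) : ℝ))^2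
          else 0) :=
    Finset.sum_congr rfl (fun c _ => Fw_bulk_eval i b c hb)
  rw [h1, range_eq_Ico, ← Finset.sum_Ico_consecutive _ (Nat.zero_le (2*p)) hpn]
  have h0 : ∑ c ∈ Finset.Ico 0 (2*p),
      (if 2*p ≤ c then
          (if i < 2*p then (n:ℝ) - (k:ℝ) else (n:ℝ)) / (((n - 2*p : ℕ) : ℝ))^2
        else 0) = 0 := by
    apply Finset.sum_eq_zero
    intro c hc
    rw [Finset.mem_Ico] at hc
    rw [if_neg (by omega)]
  have h2 : ∑ c ∈ Finset.Ico (2*p) n,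
      (if 2*p ≤ c then
          (if i < 2*p then (n:ℝ) - (k:ℝ) else (n:ℝ)) / (((n - 2*p : ℕ) : ℝ))^2
        else 0)
      = ∑ _c ∈ Finset.Ico (2*p) n,
          (if i < 2*p then (n:ℝ) - (k:ℝ) else (n:ℝ)) / (((n - 2*p : ℕ) : ℝ))^2 :=
    Finset.sum_congr rfl (fun c hc => by
      rw [Finset.mem_Ico] at hc
      exact if_pos (by omega))
  rw [h0, h2, zero_add, Finset.sum_const, Nat.card_Ico, nsmul_eq_mul]

lemma sum_c_xpart {k n p : ℕ} (hpn : 2*p ≤ n) (i b : ℕ) (hb : b < 2*p) :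
    ∑ c ∈ range n, Fw k n p i b c
      = (if i = 2*(b/2) then (k:ℝ)/2 else 0) + (if i = 2*(b/2)+1 then (k:ℝ)/2 else 0) := by
  have hx1 : 2*(b/2)+1 < 2*p := by omega
  have hsub : ({2*(b/2), 2*(b/2)+1} : Finset ℕ) ⊆ range n := by
    intro c hc
    simp only [Finset.mem_insert, Finset.mem_singleton] at hc
    rw [Finset.mem_range]; omega
  have hout : ∀ c ∈ range n, c ∉ ({2*(b/2), 2*(b/2)+1} : Finset ℕ) → Fw k n p i b c = 0 := by
    intro c _ hc
    simp only [Finset.mem_insert, Finset.mem_singleton] at hc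
    push_neg at hc
    unfold Fw
    rw [if_neg (by omega), if_neg (by rintro ⟨h1, h2, h3, -⟩; omega)]
  rw [← Finset.sum_subset hsub hout, Finset.sum_pair (by omega : 2*(b/2) ≠ 2*(b/2)+1)]
  rw [Fw_x_eval i b (2*(b/2)) hb (by omega) (by omega),
      Fw_x_eval i b (2*(b/2)+1) hb hx1 (by omega)]
  by_cases hpar : b % 2 = 0
  · rw [if_pos (by omega : b = 2*(b/2)), if_neg (by omega : ¬ b = 2*(b/2)+1)]
  · rw [if_neg (by omega : ¬ b = 2*(b/2)), if_pos (by omega : b = 2*(b/2)+1)]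
    exact add_comm _ _

lemma sum_bc_row {k n p : ℕ} (hk : 1 ≤ k) (hkn : k < n) (hpk : 2*p ≤ k)
    (hpn : 2*p+1 ≤ n) (i : ℕ) :
    ∑ b ∈ range n, ∑ c ∈ range n, Fw k n p i b c = (n:ℝ) := by
  have hq : 2*p ≤ n := by omega
  have hμ : (((n - 2*p : ℕ)) : ℝ) ≠ 0 := Nat.cast_ne_zero.mpr (by omega)
  have e1 : (range n).filter (fun b => b < 2*p) = range (2*p) := by
    ext x
    simp only [Finset.mem_filter, Finset.mem_range]
    omega
  have e2 : (range n).filter (fun b => ¬ b < 2*p) = Finset.Ico (2*p) n := by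
    ext x
    simp only [Finset.mem_filter, Finset.mem_range, Finset.mem_Ico]
    omega
  rw [← Finset.sum_filter_add_sum_filter_not (range n) (fun b => b < 2*p)
    (fun b => ∑ c ∈ range n, Fw k n p i b c), e1, e2]
  have hA : ∑ b ∈ Finset.range (2*p), ∑ c ∈ Finset.range n, Fw k n p i b c
      = if i < 2*p then (k:ℝ) else 0 := by
    have hA1 : ∑ b ∈ Finset.range (2*p), ∑ c ∈ Finset.range n, Fw k n p i b c
        = ∑ b ∈ Finset.range (2*p),
            ((if i = 2*(b/2) then (k:ℝ)/2 else 0) + (if i = 2*(b/2)+1 then (k:ℝ)/2 else 0)) :=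
      Finset.sum_congr rfl (fun b hb => by
        rw [Finset.mem_range] at hb
        exact sum_c_xpart hq i b (by omega))
    rw [hA1]
    by_cases hi : i < 2*p
    · rw [if_pos hi]
      have hsub : ({2*(i/2), 2*(i/2)+1} : Finset ℕ) ⊆ Finset.range (2*p) := by
        intro b hb
        simp only [Finset.mem_insert, Finset.mem_singleton] at hb
        rw [Finset.mem_range]; omega
      have hout : ∀ b ∈ Finset.range (2*p), b ∉ ({2*(i/2), 2*(i/2)+1} : Finset ℕ) →
          ((if i = 2*(b/2) then (k:ℝ)/2 else 0) + (if i = 2*(b/2)+1 then (k:ℝ)/2 else 0)) = 0 := by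
        intro b _ hb
        simp only [Finset.mem_insert, Finset.mem_singleton] at hb
        push_neg at hb
        rw [if_neg (by omega), if_neg (by omega), add_zero]
      rw [← Finset.sum_subset hsub hout, Finset.sum_pair (by omega : 2*(i/2) ≠ 2*(i/2)+1)]
      rw [show (2*(i/2))/2 = i/2 from by omega, show (2*(i/2)+1)/2 = i/2 from by omega]
      by_cases hpar : i % 2 = 0
      · rw [if_pos (by omega : i = 2*(i/2)), if_neg (by omega : ¬ i = 2*(i/2)+1)]
        ring
      · rw [if_neg (by omega : ¬ i = 2*(i/2)), if_pos (by omega : i = 2*(i/2)+1)]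
        ring
    · rw [if_neg hi]
      apply Finset.sum_eq_zero
      intro b hb
      rw [Finset.mem_range] at hb
      rw [if_neg (by omega), if_neg (by omega), add_zero]
  have hB : ∑ b ∈ Finset.Ico (2*p) n, ∑ c ∈ Finset.range n, Fw k n p i b c
      = if i < 2*p then (n:ℝ) - (k:ℝ) else (n:ℝ) := by
    have hB1 : ∑ b ∈ Finset.Ico (2*p) n, ∑ c ∈ Finset.range n, Fw k n p i b c
        = ∑ _b ∈ Finset.Ico (2*p) n,
            ((n - 2*p : ℕ) : ℝ) *
              ((if i < 2*p then (n:ℝ) - (k:ℝ) else (n:ℝ)) / (((n - 2*p : ℕ) : ℝ))^2) :=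
      Finset.sum_congr rfl (fun b hb => by
        rw [Finset.mem_Ico] at hb
        exact sum_c_bulk hq i b (by omega))
    rw [hB1, Finset.sum_const, Nat.card_Ico, nsmul_eq_mul]
    rw [← mul_assoc, ← pow_two, mul_comm, div_mul_cancel₀ _ (pow_ne_zero 2 hμ)]
  rw [hA, hB]
  by_cases hi : i < 2*p
  · rw [if_pos hi, if_pos hi]; ring
  · rw [if_neg hi, if_neg hi]; ring

lemma sum_ic_col {k n p : ℕ} (hk : 1 ≤ k) (hkn : k < n) (hpk : 2*p ≤ k)
    (hpn : 2*p+1 ≤ n) (v : ℕ) (hv : v < n) :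
    ∑ i ∈ range k, ∑ c ∈ range n, Fw k n p i v c = (k:ℝ) := by
  have hq : 2*p ≤ n := by omega
  have hμ : (((n - 2*p : ℕ)) : ℝ) ≠ 0 := Nat.cast_ne_zero.mpr (by omega)
  by_cases hvq : 2*p ≤ v
  · have h1 : ∑ i ∈ range k, ∑ c ∈ range n, Fw k n p i v c
        = ∑ i ∈ range k,
            (if i < 2*p then (n:ℝ) - (k:ℝ) else (n:ℝ)) / ((n - 2*p : ℕ) : ℝ) :=
      Finset.sum_congr rfl (fun i _ => by
        rw [sum_c_bulk hq i v hvq]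
        rw [pow_two, div_mul_eq_div_div, mul_comm, div_mul_cancel₀ _ hμ])
    rw [h1, ← Finset.sum_div]
    have hsum : ∑ i ∈ range k, (if i < 2*p then (n:ℝ) - (k:ℝ) else (n:ℝ))
        = (k:ℝ) * (((n - 2*p : ℕ)) : ℝ) := by
      rw [range_eq_Ico, ← Finset.sum_Ico_consecutive _ (Nat.zero_le (2*p)) (by omega : 2*p ≤ k)]
      have h2 : ∑ i ∈ Finset.Ico 0 (2*p), (if i < 2*p then (n:ℝ) - (k:ℝ) else (n:ℝ))
          = ∑ _i ∈ Finset.Ico 0 (2*p), ((n:ℝ) - (k:ℝ)) :=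
        Finset.sum_congr rfl (fun i hi => by
          rw [Finset.mem_Ico] at hi
          exact if_pos (by omega))
      have h3 : ∑ i ∈ Finset.Ico (2*p) k, (if i < 2*p then (n:ℝ) - (k:ℝ) else (n:ℝ))
          = ∑ _i ∈ Finset.Ico (2*p) k, (n:ℝ) :=
        Finset.sum_congr rfl (fun i hi => by
          rw [Finset.mem_Ico] at hi
          exact if_neg (by omega))
      rw [h2, h3, Finset.sum_const, Finset.sum_const, Nat.card_Ico, Nat.card_Ico,
        nsmul_eq_mul, nsmul_eq_mul]
      rw [Nat.cast_sub (by omega : 2*p ≤ k), Nat.cast_sub hq, Nat.sub_zero]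
      push_cast
      ring
    rw [hsum, mul_div_assoc, div_self hμ, mul_one]
  · have h1 : ∑ i ∈ range k, ∑ c ∈ range n, Fw k n p i v c
        = ∑ i ∈ range k,
            ((if i = 2*(v/2) then (k:ℝ)/2 else 0) + (if i = 2*(v/2)+1 then (k:ℝ)/2 else 0)) :=
      Finset.sum_congr rfl (fun i _ => sum_c_xpart hq i v (by omega))
    rw [h1, Finset.sum_add_distrib]
    rw [Finset.sum_ite_eq' (range k) (2*(v/2)) (fun _ => (k:ℝ)/2)]
    rw [Finset.sum_ite_eq' (range k) (2*(v/2)+1) (fun _ => (k:ℝ)/2)]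
    rw [if_pos (Finset.mem_range.mpr (by omega)), if_pos (Finset.mem_range.mpr (by omega))]
    ring

lemma sum_ib_col {k n p : ℕ} (hk : 1 ≤ k) (hkn : k < n) (hpk : 2*p ≤ k)
    (hpn : 2*p+1 ≤ n) (w : ℕ) (hw : w < n) :
    ∑ i ∈ range k, ∑ b ∈ range n, Fw k n p i b w = (k:ℝ) := by
  have h1 : ∑ i ∈ range k, ∑ b ∈ range n, Fw k n p i b w
      = ∑ i ∈ range k, ∑ c ∈ range n, Fw k n p i w c :=
    Finset.sum_congr rfl (fun i _ =>
      Finset.sum_congr rfl (fun b _ => Fw_symm k n p i b w))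
  rw [h1]
  exact sum_ic_col hk hkn hpk hpn w hw

/-- The weight function as a function on edge triples. -/
noncomputable def fconstr (k n p : ℕ) : Fin k × Fin n × Fin n → ℝ :=
  fun e => Fw k n p e.1.val e.2.1.val e.2.2.val

lemma redA {k n p : ℕ} (v : Fin k) :
    (∑ e : Fin k × Fin n × Fin n, if e.1 = v then fconstr k n p e else 0)
      = ∑ b ∈ range n, ∑ c ∈ range n, Fw k n p v.val b c := by
  simp only [Fintype.sum_prod_type]
  have h1 : ∀ x : Fin k, ∀ b : Fin n,
      (∑ c : Fin n, if x = v then fconstr k n p (x, b, c) else 0)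
        = if x = v then (∑ c : Fin n, fconstr k n p (x, b, c)) else 0 := by
    intro x b
    split_ifs with h
    · rfl
    · exact Finset.sum_eq_zero (fun c _ => rfl)
  have h2 : (∑ x : Fin k, ∑ b : Fin n, ∑ c : Fin n, if x = v then fconstr k n p (x, b, c) else 0)
      = ∑ x : Fin k, if x = v then (∑ b : Fin n, ∑ c : Fin n, fconstr k n p (x, b, c)) else 0 := by
    refine Finset.sum_congr rfl (fun x _ => ?_)
    rw [Finset.sum_congr rfl (fun b _ => h1 x b)]
    split_ifs with h
    · rfl
    · exact Finset.sum_eq_zero (fun b _ => rfl)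
  rw [h2, Finset.sum_ite_eq' Finset.univ v
    (fun x => ∑ b : Fin n, ∑ c : Fin n, fconstr k n p (x, b, c)), if_pos (Finset.mem_univ v)]
  have h3 : (∑ b : Fin n, ∑ c : Fin n, fconstr k n p (v, b, c))
      = ∑ b : Fin n, ∑ c ∈ range n, Fw k n p v.val b.val c :=
    Finset.sum_congr rfl (fun b _ =>
      Fin.sum_univ_eq_sum_range (fun cv => Fw k n p v.val b.val cv) n)
  rw [h3]
  exact Fin.sum_univ_eq_sum_range (fun bv => ∑ c ∈ range n, Fw k n p v.val bv c) n

lemma redB {k n p : ℕ} (v : Fin n) :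
    (∑ e : Fin k × Fin n × Fin n, if e.2.1 = v then fconstr k n p e else 0)
      = ∑ i ∈ range k, ∑ c ∈ range n, Fw k n p i v.val c := by
  simp only [Fintype.sum_prod_type]
  have h1 : ∀ x : Fin k, ∀ b : Fin n,
      (∑ c : Fin n, if b = v then fconstr k n p (x, b, c) else 0)
        = if b = v then (∑ c : Fin n, fconstr k n p (x, b, c)) else 0 := by
    intro x b
    split_ifs with h
    · rfl
    · exact Finset.sum_eq_zero (fun c _ => rfl)
  have h2 : (∑ x : Fin k, ∑ b : Fin n, ∑ c : Fin n, if b = v then fconstr k n p (x, b, c) else 0)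
      = ∑ x : Fin k, ∑ c : Fin n, fconstr k n p (x, v, c) := by
    refine Finset.sum_congr rfl (fun x _ => ?_)
    rw [Finset.sum_congr rfl (fun b _ => h1 x b)]
    rw [Finset.sum_ite_eq' Finset.univ v (fun b => ∑ c : Fin n, fconstr k n p (x, b, c)),
      if_pos (Finset.mem_univ v)]
  rw [h2]
  have h3 : (∑ x : Fin k, ∑ c : Fin n, fconstr k n p (x, v, c))
      = ∑ x : Fin k, ∑ c ∈ range n, Fw k n p x.val v.val c :=
    Finset.sum_congr rfl (fun x _ =>
      Fin.sum_univ_eq_sum_range (fun cv => Fw k n p x.val v.val cv) n)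
  rw [h3]
  exact Fin.sum_univ_eq_sum_range (fun iv => ∑ c ∈ range n, Fw k n p iv v.val c) k

lemma redC {k n p : ℕ} (v : Fin n) :
    (∑ e : Fin k × Fin n × Fin n, if e.2.2 = v then fconstr k n p e else 0)
      = ∑ i ∈ range k, ∑ b ∈ range n, Fw k n p i b v.val := by
  simp only [Fintype.sum_prod_type]
  have h2 : (∑ x : Fin k, ∑ b : Fin n, ∑ c : Fin n, if c = v then fconstr k n p (x, b, c) else 0)
      = ∑ x : Fin k, ∑ b : Fin n, fconstr k n p (x, b, v) := by
    refine Finset.sum_congr rfl (fun x _ => Finset.sum_congr rfl (fun b _ => ?_))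
    rw [Finset.sum_ite_eq' Finset.univ v (fun c => fconstr k n p (x, b, c)),
      if_pos (Finset.mem_univ v)]
  rw [h2]
  have h3 : (∑ x : Fin k, ∑ b : Fin n, fconstr k n p (x, b, v))
      = ∑ x : Fin k, ∑ b ∈ range n, Fw k n p x.val b v.val :=
    Finset.sum_congr rfl (fun x _ =>
      Fin.sum_univ_eq_sum_range (fun bv => Fw k n p x.val bv v.val) n)
  rw [h3]
  exact Fin.sum_univ_eq_sum_range (fun iv => ∑ b ∈ range n, Fw k n p iv b v.val) k

lemma construction (k n p : ℕ) (hk : 1 ≤ k) (hkn : k < n) (hpk : 2*p ≤ k)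
    (hpn : 2*p+1 ≤ n) :
    ∃ H : Finset (Fin k × Fin n × Fin n), TriFracBalanced H ∧
      ∀ M, TriMatching H M → M.card ≤ k ∧ M.card ≤ n - p := by
  classical
  refine ⟨Finset.univ.filter (fun e => fconstr k n p e ≠ 0), ⟨fconstr k n p,
    ⟨?_, ?_, ?_, ?_, ?_⟩, ?_⟩, ?_⟩
  · intro e
    exact Fw_nonneg (le_of_lt hkn) _ _ _
  · intro e he
    by_contra h
    exact he (Finset.mem_filter.mpr ⟨Finset.mem_univ _, h⟩)
  · intro v w
    rw [redA v, redA w, sum_bc_row hk hkn hpk hpn v.val, sum_bc_row hk hkn hpk hpn w.val]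
  · intro v w
    rw [redB v, redB w, sum_ic_col hk hkn hpk hpn v.val v.isLt,
      sum_ic_col hk hkn hpk hpn w.val w.isLt]
  · intro v w
    rw [redC v, redC w, sum_ib_col hk hkn hpk hpn v.val v.isLt,
      sum_ib_col hk hkn hpk hpn w.val w.isLt]
  · -- f ≠ 0
    have hpos : 0 < fconstr k n p (⟨0, hk⟩, ⟨2*p, by omega⟩, ⟨2*p, by omega⟩) := by
      show 0 < Fw k n p 0 (2*p) (2*p)
      unfold Fw
      rw [if_pos ⟨le_refl _, le_refl _⟩]
      have hμ : (0:ℝ) < ((n - 2*p : ℕ) : ℝ) := by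
        exact_mod_cast (by omega : 0 < n - 2*p)
      split_ifs with h
      · apply div_pos _ (by positivity)
        have : (k:ℝ) < n := by exact_mod_cast hkn
        linarith
      · apply div_pos _ (by positivity)
        exact_mod_cast (by omega : 0 < n)
    intro h0
    rw [h0] at hpos
    exact lt_irrefl 0 hpos
  · -- matching bound
    intro M hM
    obtain ⟨hsub, hdiff⟩ := hM
    have hstruct : ∀ e ∈ M, (2*p ≤ e.2.1.val ∧ 2*p ≤ e.2.2.val) ∨
        (e.2.1.val < 2*p ∧ e.2.2.val < 2*p ∧ e.2.1.val/2 = e.2.2.val/2 ∧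
          e.1.val = (if e.2.1.val = e.2.2.val then 2*(e.2.1.val/2) else 2*(e.2.1.val/2)+1)) := by
      intro e he
      have hne : fconstr k n p e ≠ 0 := (Finset.mem_filter.mp (hsub he)).2
      by_cases h1 : 2*p ≤ e.2.1.val ∧ 2*p ≤ e.2.2.val
      · exact Or.inl h1
      · by_cases h2 : e.2.1.val < 2*p ∧ e.2.2.val < 2*p ∧ e.2.1.val/2 = e.2.2.val/2 ∧
            e.1.val = (if e.2.1.val = e.2.2.val then 2*(e.2.1.val/2) else 2*(e.2.1.val/2)+1)
        · exact Or.inr h2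
        · exfalso
          apply hne
          unfold fconstr Fw
          rw [if_neg h1, if_neg h2]
    constructor
    · calc M.card ≤ (Finset.univ : Finset (Fin k)).card := by
            apply Finset.card_le_card_of_injOn (fun e => e.1)
              (fun _ _ => Finset.mem_univ _)
            intro e he e' he' heq
            by_contra hne
            exact (hdiff e he e' he' hne).1 heq
        _ = k := by simp
    · have hsplit := Finset.card_filter_add_card_filter_not
        (s := M) (p := fun e => e.2.2.val < 2*p)
      have hX : (M.filter (fun e => e.2.2.val < 2*p)).card ≤ (Finset.range p).card := by
        apply Finset.card_le_card_of_injOn (fun e => e.2.2.val / 2)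
        · intro e he
          rw [Finset.mem_coe, Finset.mem_filter] at he
          have hlt : e.2.2.val < 2*p := he.2
          show e.2.2.val / 2 ∈ Finset.range p
          rw [Finset.mem_range]
          omega
        · intro e he e' he' heq
          have heq' : e.2.2.val / 2 = e'.2.2.val / 2 := heq
          simp only [Finset.coe_filter, Set.mem_setOf_eq] at he he'
          obtain ⟨heM, hec⟩ := he
          obtain ⟨heM', hec'⟩ := he'
          by_contra hne
          have hd := hdiff e heM e' heM' hne
          have hi : e.1.val ≠ e'.1.val := fun h => hd.1 (Fin.ext h)
          have hbv : e.2.1.val ≠ e'.2.1.val := fun h => hd.2.1 (Fin.ext h)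
          have hcv : e.2.2.val ≠ e'.2.2.val := fun h => hd.2.2 (Fin.ext h)
          have hs := hstruct e heM
          have hs' := hstruct e' heM'
          rcases hs with ⟨-, hbad⟩ | ⟨hb1, hc1, hdv, hcol⟩
          · omega
          rcases hs' with ⟨-, hbad⟩ | ⟨hb1', hc1', hdv', hcol'⟩
          · omega
          split_ifs at hcol hcol' <;> omega
      have hBk : (M.filter (fun e => ¬ e.2.2.val < 2*p)).card ≤ (Finset.Ico (2*p) n).card := by
        apply Finset.card_le_card_of_injOn (fun e => e.2.2.val)
        · intro e he
          rw [Finset.mem_coe, Finset.mem_filter] at he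
          have hge : ¬ e.2.2.val < 2*p := he.2
          show e.2.2.val ∈ Finset.Ico (2*p) n
          rw [Finset.mem_Ico]
          exact ⟨by omega, e.2.2.isLt⟩
        · intro e he e' he' heq
          have heq' : e.2.2.val = e'.2.2.val := heq
          simp only [Finset.coe_filter, Set.mem_setOf_eq] at he he'
          by_contra hne
          exact (hdiff e he.1 e' he'.1 hne).2.2 (Fin.ext heq')
      rw [Finset.card_range] at hX
      rw [Nat.card_Ico] at hBk
      omega

lemma glue (k n b' : ℕ) (hk : 1 ≤ k) (hkn : k < n)
    (hcase : k ≤ b' ∨ (2*(n - b') ≤ k ∧ 2*(n - b') + 1 ≤ n)) :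
    ∃ H : Finset (Fin k × Fin n × Fin n), TriFracBalanced H ∧
      ∀ M, TriMatching H M → M.card ≤ min k b' := by
  rcases hcase with h | h
  · obtain ⟨H, hbal, hbound⟩ := construction k n 0 hk hkn (by omega) (by omega)
    exact ⟨H, hbal, fun M hM => le_min (hbound M hM).1 ((hbound M hM).1.trans h)⟩
  · obtain ⟨H, hbal, hbound⟩ := construction k n (n - b') hk hkn h.1 h.2
    refine ⟨H, hbal, fun M hM => le_min (hbound M hM).1 ?_⟩
    have := (hbound M hM).2
    omega

end BMAux

/-- For `1 ≤ k < n`: if `n` is even there is a `(k,n,n)`-fractionally balanced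
tripartite hypergraph with matching number at most `min k ⌊3n/4⌋`, and if `n` is
odd there is one with matching number at most `min k ⌊(3n+1)/4⌋`. -/
theorem bm_upper_k_n_n (k n : ℕ) (hk : 1 ≤ k) (hkn : k < n) :
    (Even n → ∃ H : Finset (Fin k × Fin n × Fin n), TriFracBalanced H ∧
      ∀ M, TriMatching H M → M.card ≤ min k (3 * n / 4)) ∧
    (Odd n → ∃ H : Finset (Fin k × Fin n × Fin n), TriFracBalanced H ∧
      ∀ M, TriMatching H M → M.card ≤ min k ((3 * n + 1) / 4)) := by
  constructor
  · intro hev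
    have h2 : n % 2 = 0 := Nat.even_iff.mp hev
    exact BMAux.glue k n (3*n/4) hk hkn (by omega)
  · intro hodd
    have h2 : n % 2 = 1 := Nat.odd_iff.mp hodd
    exact BMAux.glue k n ((3*n+1)/4) hk hkn (by omega)
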